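/- Assume r ≥ 1. For every positive semidefinite complex matrix σ indexed by (Fin s → Fin 4) with trace σ = 1 (a density matrix), the real part of trace(Π * (|0^r⟩⟨0^r| ⊗ σ)) is at most 1/2. (Second case of the mixed-answer lemma: if the provers answer qudits in which at least one share of the GHZ-like state is replaced by |0⟩, the answered state projects onto the correct codespace with probability at most one half.) -/

import Mathlib

open Matrix Kronecker
open scoped ComplexOrder

/-- Standard basis vector of a single block of `q` qudits, supported at the
constant function `fun _ => u`. -/
def basisVec (q : ℕ) (u : Fin 4) : (Fin q → Fin 4) → ℂ :=
  fun x => if x = (fun _ => u) then 1 else 0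

/-- Standard basis vector `|u^r, v^s⟩` of the two-block system, supported at
the pair of constant functions. -/
def basisVec2 (r s : ℕ) (u v : Fin 4) : ((Fin r → Fin 4) × (Fin s → Fin 4)) → ℂ :=
  fun x => if x = ((fun _ => u), (fun _ => v)) then 1 else 0

/-- The codespace projector `Π` on all `r + s` qudits. -/
noncomputable def codeProj2 (r s : ℕ) :
    Matrix ((Fin r → Fin 4) × (Fin s → Fin 4)) ((Fin r → Fin 4) × (Fin s → Fin 4)) ℂ :=
  (1/2 : ℂ) •
    ((∑ u ∈ ({0,1} : Finset (Fin 4)), ∑ v ∈ ({0,1} : Finset (Fin 4)),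
        vecMulVec (basisVec2 r s u u) (star (basisVec2 r s v v)))
      + (∑ u ∈ ({2,3} : Finset (Fin 4)), ∑ v ∈ ({2,3} : Finset (Fin 4)),
        vecMulVec (basisVec2 r s u u) (star (basisVec2 r s v v))))

lemma trace_outer (r s : ℕ) (u v : Fin 4)
    (M : Matrix ((Fin r → Fin 4) × (Fin s → Fin 4)) ((Fin r → Fin 4) × (Fin s → Fin 4)) ℂ) :
    (vecMulVec (basisVec2 r s u u) (star (basisVec2 r s v v)) * M).trace
      = M ((fun _ => v), (fun _ => v)) ((fun _ => u), (fun _ => u)) := by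
  simp [Matrix.trace, Matrix.mul_apply, vecMulVec_apply, basisVec2, Matrix.diag,
    apply_ite (starRingEnd ℂ), Finset.mul_sum, ite_and]

lemma constFun_eq (r : ℕ) (hr : 1 ≤ r) (u w : Fin 4) :
    ((fun _ : Fin r => u) = fun _ => w) ↔ u = w := by
  constructor
  · intro h; exact congrFun h ⟨0, hr⟩
  · rintro rfl; rfl

theorem mixed_answer_projects_at_most_half (r s : ℕ) (hr : 1 ≤ r)
    (σ : Matrix (Fin s → Fin 4) (Fin s → Fin 4) ℂ)
    (hσ : σ.PosSemidef) (htr : σ.trace = 1) :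
    ((codeProj2 r s * (vecMulVec (basisVec r 0) (star (basisVec r 0)) ⊗ₖ σ)).trace).re
      ≤ 1/2 := by
  set M := vecMulVec (basisVec r 0) (star (basisVec r 0)) ⊗ₖ σ with hM
  have hMval : ∀ u v : Fin 4,
      M ((fun _ => v), (fun _ => v)) ((fun _ => u), (fun _ => u))
        = (if v = 0 then 1 else 0) * (if u = 0 then 1 else 0)
            * σ (fun _ => v) (fun _ => u) := by
    intro u v
    simp [hM, Matrix.kroneckerMap_apply, vecMulVec_apply, basisVec,
      apply_ite (starRingEnd ℂ), constFun_eq r hr]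
  have htrace : (codeProj2 r s * M).trace
      = (1/2 : ℂ) * σ (fun _ => 0) (fun _ => 0) := by
    rw [codeProj2, Matrix.smul_mul, Matrix.add_mul, Matrix.sum_mul, Matrix.sum_mul]
    simp only [Matrix.sum_mul, trace_smul, trace_add, Matrix.trace_sum, trace_outer, hMval]
    norm_num [show (1:Fin 4) ≠ 0 by decide, show (2:Fin 4) ≠ 0 by decide,
      show (3:Fin 4) ≠ 0 by decide, show (0:Fin 4) ≠ 2 by decide,
      show (0:Fin 4) ≠ 3 by decide, show (0:Fin 4) ≠ 1 by decide,
      show (1:Fin 4) ≠ 2 by decide, show (1:Fin 4) ≠ 3 by decide,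
      show (2:Fin 4) ≠ 3 by decide, show (2:Fin 4) ≠ 1 by decide,
      show (3:Fin 4) ≠ 1 by decide, show (3:Fin 4) ≠ 2 by decide,
      show (1:Fin 4) ≠ 0 by decide]
  rw [htrace]
  have h0 : ∀ i, 0 ≤ σ i i := by
    intro i
    exact hσ.diag_nonneg
  have h1 : σ (fun _ => 0) (fun _ => 0) ≤ 1 := by
    rw [← htr]
    exact Finset.single_le_sum (f := fun i => σ i i) (fun i _ => h0 i) (Finset.mem_univ _)
  have h1re : (σ (fun _ => 0) (fun _ => 0)).re ≤ 1 := by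
    have := Complex.le_def.mp h1
    simpa using this.1
  have := hσ.1
  simp only [Complex.mul_re]
  have him : (σ (fun _ => 0) (fun _ => 0)).im = 0 := by
    have h := h0 (fun _ => 0)
    have := Complex.le_def.mp h
    simpa using this.2.symm
  rw [him]
  norm_num
  linarith
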